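/- Let X be a metrizable topological space. If Odd has a winning strategy in the classical Banach–Mazur game BM(X), then X contains a dense completely metrizable subspace. -/

import Mathlib

/-! The classical Banach–Mazur game on a topological space. -/

section BMtop

variable {X : Type*} [TopologicalSpace X]

/-- A play of the Banach–Mazur game: a decreasing sequence of nonempty open sets. -/
def TopPlay (U : ℕ → Set X) : Prop :=
  (∀ n, IsOpen (U n)) ∧ (∀ n, (U n).Nonempty) ∧ ∀ n, U (n + 1) ⊆ U n

/-- A finite decreasing sequence of nonempty open sets (a partial play). -/
def TopPartialPlay {m : ℕ} (v : Fin m → Set X) : Prop :=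
  (∀ i, IsOpen (v i)) ∧ (∀ i, (v i).Nonempty) ∧ ∀ i j : Fin m, i ≤ j → v j ⊆ v i

/-- A strategy for Odd: a value for every finite sequence of odd length. -/
def TopOddStrategy (X : Type*) := (k : ℕ) → (Fin (2 * k + 1) → Set X) → Set X

/-- A strategy for Odd is valid if it assigns, to every finite decreasing
sequence of nonempty open sets of odd length, a nonempty open subset of its
last term. -/
def TopOddValid (s : TopOddStrategy X) : Prop :=
  ∀ (k : ℕ) (v : Fin (2 * k + 1) → Set X), TopPartialPlay v →
    IsOpen (s k v) ∧ (s k v).Nonempty ∧ s k v ⊆ v (Fin.last (2 * k))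

/-- A play follows Odd's strategy `s` if every odd-indexed term is the value of
`s` on the preceding terms. -/
def TopOddFollows (U : ℕ → Set X) (s : TopOddStrategy X) : Prop :=
  ∀ k : ℕ, U (2 * k + 1) = s k (fun i => U i.val)

/-- Odd has a winning strategy in the classical Banach–Mazur game `BM(X)`
(he wins iff the intersection of the play is nonempty). -/
def TopOddWins (X : Type*) [TopologicalSpace X] : Prop :=
  ∃ s : TopOddStrategy X, TopOddValid s ∧
    ∀ U : ℕ → Set X, TopPlay U → TopOddFollows U s → (⋂ n, U n).Nonempty

/-- A strategy for Eve: a value for the empty sequence and for every finite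
sequence of even positive length. -/
def TopEveStrategy (X : Type*) := (k : ℕ) → (Fin (2 * k) → Set X) → Set X

/-- A strategy for Eve is valid if it assigns, to every finite decreasing
sequence of nonempty open sets of even length, a nonempty open set contained in
all of its terms (for the empty sequence: just a nonempty open set). -/
def TopEveValid (e : TopEveStrategy X) : Prop :=
  ∀ (k : ℕ) (v : Fin (2 * k) → Set X), TopPartialPlay v →
    IsOpen (e k v) ∧ (e k v).Nonempty ∧ ∀ i : Fin (2 * k), e k v ⊆ v i

/-- A play follows Eve's strategy `e` if every even-indexed term is the value of
`e` on the preceding terms. -/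
def TopEveFollows (U : ℕ → Set X) (e : TopEveStrategy X) : Prop :=
  ∀ k : ℕ, U (2 * k) = e k (fun i => U i.val)

/-- Eve has a winning strategy in the classical Banach–Mazur game `BM(X)`
(she wins iff the intersection of the play is empty). -/
def TopEveWins (X : Type*) [TopologicalSpace X] : Prop :=
  ∃ e : TopEveStrategy X, TopEveValid e ∧
    ∀ U : ℕ → Set X, TopPlay U → TopEveFollows U e → ¬ (⋂ n, U n).Nonempty

/-- Odd has a winning strategy in the game `BM(X, ⋆)` (he wins iff the
intersection of the play is a one-point set). -/
def TopOddWinsStar (X : Type*) [TopologicalSpace X] : Prop :=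
  ∃ s : TopOddStrategy X, TopOddValid s ∧
    ∀ U : ℕ → Set X, TopPlay U → TopOddFollows U s → ∃ x : X, (⋂ n, U n) = {x}

/-- Eve has a winning strategy in the game `BM(X, ⋆)` (she wins iff the
intersection of the play is not a one-point set). -/
def TopEveWinsStar (X : Type*) [TopologicalSpace X] : Prop :=
  ∃ e : TopEveStrategy X, TopEveValid e ∧
    ∀ U : ℕ → Set X, TopPlay U → TopEveFollows U e → ¬ ∃ x : X, (⋂ n, U n) = {x}

/-- A topological space is completely metrizable if its topology is induced by a
complete metric. -/
def IsCompletelyMetrizable (Y : Type*) [t : TopologicalSpace Y] : Prop :=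
  ∃ m : MetricSpace Y, m.toUniformSpace.toTopologicalSpace = t ∧
    @CompleteSpace Y m.toUniformSpace

end BMtop

section BMproof

open Set
open scoped ENNReal

private lemma exists_maxfam {α : Type*} (A : Set (Set α)) (r : Set α → Set α) :
    ∃ C, C ⊆ A ∧ (∀ V ∈ C, ∀ W ∈ C, V ≠ W → Disjoint (r V) (r W)) ∧
      ∀ V ∈ A, (r V).Nonempty → ∃ W ∈ C, ((r V) ∩ (r W)).Nonempty := by
  set S : Set (Set (Set α)) :=
    {C | C ⊆ A ∧ ∀ V ∈ C, ∀ W ∈ C, V ≠ W → Disjoint (r V) (r W)} with hS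
  have hzorn : ∀ c ⊆ S, IsChain (· ⊆ ·) c → ∃ ub ∈ S, ∀ t ∈ c, t ⊆ ub := by
    intro c hcS hchain
    refine ⟨⋃₀ c, ⟨sUnion_subset fun t ht => (hcS ht).1, ?_⟩,
      fun t ht => subset_sUnion_of_mem ht⟩
    rintro V ⟨t, ht, hVt⟩ W ⟨t', ht', hWt'⟩ hne
    rcases hchain.total ht ht' with h | h
    · exact (hcS ht').2 V (h hVt) W hWt' hne
    · exact (hcS ht).2 V hVt W (h hWt') hne
  obtain ⟨C, hC⟩ := zorn_subset S hzorn
  refine ⟨C, hC.1.1, hC.1.2, fun V hVA hVne => ?_⟩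
  by_cases hVC : V ∈ C
  · exact ⟨V, hVC, by simpa using hVne⟩
  · by_contra hcon
    push_neg at hcon
    have hins : insert V C ∈ S := by
      constructor
      · exact insert_subset hVA hC.1.1
      · intro V₁ hV₁ V₂ hV₂ hne
        rcases Set.mem_insert_iff.1 hV₁ with rfl | hV₁'
        · rcases Set.mem_insert_iff.1 hV₂ with rfl | hV₂'
          · exact absurd rfl hne
          · exact Set.disjoint_iff_inter_eq_empty.2 (hcon V₂ hV₂')
        · rcases Set.mem_insert_iff.1 hV₂ with rfl | hV₂'
          · exact (Set.disjoint_iff_inter_eq_empty.2 (hcon V₁ hV₁')).symm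
          · exact hC.1.2 V₁ hV₁' V₂ hV₂' hne
    exact hVC (hC.2 hins (Set.subset_insert V C) (Set.mem_insert V C))

variable {X : Type*} [MetricSpace X]

/-- Sets allowed as Eve's move below a node of level `n` (whose last move is `u (2n+1)`). -/
def bmAllowed (n : ℕ) (u : ℕ → Set X) : Set (Set X) :=
  {V | IsOpen V ∧ V.Nonempty ∧ V ⊆ u (2*n+1) ∧ EMetric.diam V ≤ (2 : ℝ≥0∞)⁻¹ ^ (n+1)}

/-- Sets allowed as Eve's opening move. -/
def bmAllowed0 (X : Type*) [MetricSpace X] : Set (Set X) :=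
  {V | IsOpen V ∧ V.Nonempty ∧ EMetric.diam V ≤ 1}

variable (s : TopOddStrategy X)

/-- Odd's response to Eve's move `V` below the node `u` of level `n`. -/
def bmResp (n : ℕ) (u : ℕ → Set X) (V : Set X) : Set X :=
  s (n+1) (fun i => if (i : ℕ) = 2*n+2 then V else u i.1)

def bmResp0 (V : Set X) : Set X := s 0 (fun _ => V)

noncomputable def bmMaxfam {α : Type*} (A : Set (Set α)) (r : Set α → Set α) : Set (Set α) :=
  (exists_maxfam A r).choose

noncomputable def bmChildren (n : ℕ) (u : ℕ → Set X) : Set (Set X) :=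
  bmMaxfam (bmAllowed n u) (bmResp s n u)

noncomputable def bmChildren0 : Set (Set X) :=
  bmMaxfam (bmAllowed0 X) (bmResp0 s)

lemma bmChildren_spec (n : ℕ) (u : ℕ → Set X) :
    bmChildren s n u ⊆ bmAllowed n u ∧
    (∀ V ∈ bmChildren s n u, ∀ W ∈ bmChildren s n u, V ≠ W →
      Disjoint (bmResp s n u V) (bmResp s n u W)) ∧
    ∀ V ∈ bmAllowed n u, (bmResp s n u V).Nonempty →
      ∃ W ∈ bmChildren s n u, ((bmResp s n u V) ∩ (bmResp s n u W)).Nonempty :=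
  (exists_maxfam (bmAllowed n u) (bmResp s n u)).choose_spec

lemma bmChildren0_spec :
    bmChildren0 s ⊆ bmAllowed0 X ∧
    (∀ V ∈ bmChildren0 s, ∀ W ∈ bmChildren0 s, V ≠ W →
      Disjoint (bmResp0 s V) (bmResp0 s W)) ∧
    ∀ V ∈ bmAllowed0 X, (bmResp0 s V).Nonempty →
      ∃ W ∈ bmChildren0 s, ((bmResp0 s V) ∩ (bmResp0 s W)).Nonempty :=
  (exists_maxfam (bmAllowed0 X) (bmResp0 s)).choose_spec

/-- The tree of partial plays following Odd's strategy. -/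
def bmT : ℕ → Set (ℕ → Set X)
  | 0 => {u | u 0 ∈ bmChildren0 s ∧ u 1 = s 0 (fun i => u i.1)}
  | n+1 => {u | u ∈ bmT n ∧ u (2*n+2) ∈ bmChildren s n u ∧
      u (2*n+3) = s (n+1) (fun i => u i.1)}

lemma mem_bmT_zero {u : ℕ → Set X} :
    u ∈ bmT s 0 ↔ u 0 ∈ bmChildren0 s ∧ u 1 = s 0 (fun i => u i.1) := Iff.rfl

lemma mem_bmT_succ {n : ℕ} {u : ℕ → Set X} :
    u ∈ bmT s (n+1) ↔ u ∈ bmT s n ∧ u (2*n+2) ∈ bmChildren s n u ∧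
      u (2*n+3) = s (n+1) (fun i => u i.1) := Iff.rfl

lemma bmResp_self (n : ℕ) (u : ℕ → Set X) :
    bmResp s n u (u (2*n+2)) = s (n+1) (fun i => u i.1) := by
  unfold bmResp
  refine congrArg _ (funext fun i => ?_)
  by_cases h : (i : ℕ) = 2*n+2
  · simp [h]
  · simp [h]

lemma bmAllowed_congr {n : ℕ} {u u' : ℕ → Set X} (h : ∀ i, i < 2*n+2 → u' i = u i) :
    bmAllowed n u' = bmAllowed n u := by
  unfold bmAllowed
  rw [h (2*n+1) (by omega)]

lemma bmResp_congr {n : ℕ} {u u' : ℕ → Set X} (h : ∀ i, i < 2*n+2 → u' i = u i) :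
    bmResp s n u' = bmResp s n u := by
  funext V
  unfold bmResp
  refine congrArg _ (funext fun i => ?_)
  by_cases h' : (i : ℕ) = 2*n+2
  · simp [h']
  · simp only [h', if_false]
    exact h i.1 (by have := i.isLt; omega)

lemma bmChildren_congr {n : ℕ} {u u' : ℕ → Set X} (h : ∀ i, i < 2*n+2 → u' i = u i) :
    bmChildren s n u' = bmChildren s n u := by
  unfold bmChildren
  rw [bmAllowed_congr h, bmResp_congr s h]

private lemma chain_subset {u : ℕ → Set X} {m : ℕ}
    (h : ∀ i, i+1 ≤ m → u (i+1) ⊆ u i) :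
    ∀ j, j ≤ m → ∀ i, i ≤ j → u j ⊆ u i := by
  intro j
  induction j with
  | zero => intro _ i hi; rw [Nat.le_zero.1 hi]
  | succ j ih =>
    intro hj i hi
    rcases Nat.eq_or_lt_of_le hi with rfl | hlt
    · rfl
    · exact (h j hj).trans (ih (by omega) i (by omega))

/-- The invariants maintained along the tree. -/
def bmGood (n : ℕ) (u : ℕ → Set X) : Prop :=
  (∀ i, i ≤ 2*n+1 → IsOpen (u i)) ∧ (∀ i, i ≤ 2*n+1 → (u i).Nonempty) ∧
  (∀ i, i+1 ≤ 2*n+1 → u (i+1) ⊆ u i) ∧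
  (∀ k, k ≤ n → EMetric.diam (u (2*k)) ≤ (2 : ℝ≥0∞)⁻¹ ^ k)

lemma bmT_good (hs : TopOddValid s) : ∀ n, ∀ u ∈ bmT s n, bmGood n u := by
  intro n
  induction n with
  | zero =>
    rintro u ⟨hu0, hu1⟩
    obtain ⟨h0o, h0ne, h0d⟩ := (bmChildren0_spec s).1 hu0
    have hpp : TopPartialPlay (fun i : Fin (2*0+1) => u i.1) := by
      refine ⟨fun i => ?_, fun i => ?_, fun i j _ => ?_⟩
      · show IsOpen (u (i : ℕ))
        have : (i : ℕ) = 0 := by omega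
        rw [this]; exact h0o
      · show (u (i : ℕ)).Nonempty
        have : (i : ℕ) = 0 := by omega
        rw [this]; exact h0ne
      · show u (j : ℕ) ⊆ u (i : ℕ)
        have hi : (i : ℕ) = 0 := by omega
        have hj : (j : ℕ) = 0 := by omega
        rw [hi, hj]
    obtain ⟨h1o, h1ne, h1sub⟩ := hs 0 _ hpp
    rw [← hu1] at h1o h1ne h1sub
    refine ⟨fun i hi => ?_, fun i hi => ?_, fun i hi => ?_, fun k hk => ?_⟩
    · interval_cases i
      · exact h0o
      · exact h1o
    · interval_cases i
      · exact h0ne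
      · exact h1ne
    · have : i = 0 := by omega
      subst this
      exact h1sub
    · have : k = 0 := by omega
      subst this
      simpa using h0d
  | succ n ih =>
    rintro u ⟨hT, hch, heq⟩
    have hg := ih u hT
    obtain ⟨hVo, hVne, hVsub, hVd⟩ := (bmChildren_spec s n u).1 hch
    have hchain : ∀ i, i+1 ≤ 2*n+2 → u (i+1) ⊆ u i := by
      intro i hi
      rcases Nat.eq_or_lt_of_le hi with h | h
      · have : i = 2*n+1 := by omega
        subst this
        exact hVsub
      · exact hg.2.2.1 i (by omega)
    have hpp : TopPartialPlay (fun i : Fin (2*(n+1)+1) => u i.1) := by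
      refine ⟨fun i => ?_, fun i => ?_, fun i j hij => ?_⟩
      · show IsOpen (u (i : ℕ))
        have hi := i.isLt
        rcases Nat.lt_or_ge (i : ℕ) (2*n+2) with h | h
        · exact hg.1 i.1 (by omega)
        · have : (i : ℕ) = 2*n+2 := by omega
          rw [this]; exact hVo
      · show (u (i : ℕ)).Nonempty
        have hi := i.isLt
        rcases Nat.lt_or_ge (i : ℕ) (2*n+2) with h | h
        · exact hg.2.1 i.1 (by omega)
        · have : (i : ℕ) = 2*n+2 := by omega
          rw [this]; exact hVne
      · show u (j : ℕ) ⊆ u (i : ℕ)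
        exact chain_subset hchain j.1 (by have := j.isLt; omega) i.1 (Fin.le_def.1 hij)
    obtain ⟨h3o, h3ne, h3sub⟩ := hs (n+1) _ hpp
    rw [← heq] at h3o h3ne h3sub
    have hlast : ((Fin.last (2*(n+1))) : ℕ) = 2*n+2 := by
      rw [Fin.val_last]; omega
    rw [hlast] at h3sub
    have hchain' : ∀ i, i+1 ≤ 2*(n+1)+1 → u (i+1) ⊆ u i := by
      intro i hi
      rcases Nat.eq_or_lt_of_le hi with h | h
      · have : i = 2*n+2 := by omega
        subst this
        exact h3sub
      · exact hchain i (by omega)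
    refine ⟨fun i hi => ?_, fun i hi => ?_, hchain', fun k hk => ?_⟩
    · rcases Nat.lt_or_ge i (2*n+2) with h | h
      · exact hg.1 i (by omega)
      · rcases Nat.eq_or_lt_of_le h with h' | h'
        · rw [← h']; exact hVo
        · have : i = 2*n+3 := by omega
          rw [this]; exact h3o
    · rcases Nat.lt_or_ge i (2*n+2) with h | h
      · exact hg.2.1 i (by omega)
      · rcases Nat.eq_or_lt_of_le h with h' | h'
        · rw [← h']; exact hVne
        · have : i = 2*n+3 := by omega
          rw [this]; exact h3ne
    · rcases Nat.lt_or_ge k (n+1) with h | h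
      · exact hg.2.2.2 k (by omega)
      · have : k = n+1 := by omega
        subst this
        have h2 : 2*(n+1) = 2*n+2 := by ring
        rw [h2]
        exact hVd


lemma bmT_anti {n : ℕ} : bmT s (n+1) ⊆ bmT s n := fun _ h => h.1

lemma bmT_anti_le {m n : ℕ} (h : m ≤ n) : bmT s n ⊆ bmT s m := by
  induction n with
  | zero => have : m = 0 := by omega
            subst this; exact fun _ h => h
  | succ n ih =>
    rcases Nat.eq_or_lt_of_le h with rfl | hlt
    · exact fun _ h => h
    · exact (bmT_anti s).trans (ih (by omega))

lemma bmT_congr {n : ℕ} {u u' : ℕ → Set X} (h : ∀ i, i < 2*n+2 → u' i = u i)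
    (hu : u ∈ bmT s n) : u' ∈ bmT s n := by
  induction n generalizing u u' with
  | zero =>
    obtain ⟨h0, h1⟩ := hu
    refine ⟨by rw [h 0 (by omega)]; exact h0, ?_⟩
    have hfn : (fun i : Fin (2*0+1) => u' i.1) = fun i => u i.1 :=
      funext fun i => h i.1 (by have := i.isLt; omega)
    rw [h 1 (by omega), hfn]
    exact h1
  | succ n ih =>
    obtain ⟨hT, hch, heq⟩ := hu
    have hpre : ∀ i, i < 2*n+2 → u' i = u i := fun i hi => h i (by omega)
    refine ⟨ih hpre hT, ?_, ?_⟩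
    · rw [h (2*n+2) (by omega), bmChildren_congr s hpre]
      exact hch
    · have hfn : (fun i : Fin (2*(n+1)+1) => u' i.1) = fun i => u i.1 :=
      funext fun i => h i.1 (by have := i.isLt; omega)
      rw [h (2*n+3) (by omega), hfn]
      exact heq

lemma bmT_dichotomy (hs : TopOddValid s) :
    ∀ n, ∀ u ∈ bmT s n, ∀ u' ∈ bmT s n,
      (∀ i, i < 2*n+2 → u i = u' i) ∨ Disjoint (u (2*n+1)) (u' (2*n+1)) := by
  intro n
  induction n with
  | zero =>
    rintro u ⟨hu0, hu1⟩ u' ⟨hu'0, hu'1⟩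
    by_cases h : u 0 = u' 0
    · left
      intro i hi
      interval_cases i
      · exact h
      · rw [hu1, hu'1]
        refine congrArg _ (funext fun j => ?_)
        have : (j : ℕ) = 0 := by omega
        rw [this]; exact h
    · right
      have hd := (bmChildren0_spec s).2.1 (u 0) hu0 (u' 0) hu'0 h
      have e1 : u 1 = bmResp0 s (u 0) := by
        rw [hu1]
        unfold bmResp0
        refine congrArg _ (funext fun j => ?_)
        have : (j : ℕ) = 0 := by omega
        rw [this]
      have e2 : u' 1 = bmResp0 s (u' 0) := by
        rw [hu'1]
        unfold bmResp0
        refine congrArg _ (funext fun j => ?_)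
        have : (j : ℕ) = 0 := by omega
        rw [this]
      rw [show 2*0+1 = 1 by omega, e1, e2]
      exact hd
  | succ n ih =>
    rintro u ⟨hT, hch, heq⟩ u' ⟨hT', hch', heq'⟩
    have h21 : 2*(n+1)+1 = 2*n+3 := by omega
    rcases ih u hT u' hT' with hpre | hdis
    · have hcc : bmChildren s n u' = bmChildren s n u :=
        bmChildren_congr s (fun i hi => (hpre i hi).symm)
      by_cases h22 : u (2*n+2) = u' (2*n+2)
      · left
        intro i hi
        rcases Nat.lt_or_ge i (2*n+2) with hlt | hge
        · exact hpre i hlt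
        · rcases Nat.eq_or_lt_of_le hge with hE | hlt'
          · rw [← hE]; exact h22
          · have : i = 2*n+3 := by omega
            subst this
            rw [heq, heq']
            refine congrArg _ (funext fun j => ?_)
            have hj := j.isLt
            rcases Nat.lt_or_ge (j : ℕ) (2*n+2) with hlt2 | hge2
            · exact hpre j.1 hlt2
            · have : (j : ℕ) = 2*n+2 := by omega
              rw [this]; exact h22
      · right
        rw [h21]
        have hch'' : u' (2*n+2) ∈ bmChildren s n u := by rw [← hcc]; exact hch'
        have hd := (bmChildren_spec s n u).2.1 (u (2*n+2)) hch (u' (2*n+2)) hch'' h22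
        have e1 : u (2*n+3) = bmResp s n u (u (2*n+2)) := by
          rw [heq, bmResp_self]
        have e2 : u' (2*n+3) = bmResp s n u (u' (2*n+2)) := by
          rw [heq', ← bmResp_self s n u', bmResp_congr s (fun i hi => (hpre i hi).symm)]
        rw [e1, e2]
        exact hd
    · right
      rw [h21]
      have hg := bmT_good s hs (n+1) u ⟨hT, hch, heq⟩
      have hg' := bmT_good s hs (n+1) u' ⟨hT', hch', heq'⟩
      have hsub : u (2*n+3) ⊆ u (2*n+1) :=
        chain_subset hg.2.2.1 (2*n+3) (by omega) (2*n+1) (by omega)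
      have hsub' : u' (2*n+3) ⊆ u' (2*n+1) :=
        chain_subset hg'.2.2.1 (2*n+3) (by omega) (2*n+1) (by omega)
      exact hdis.mono hsub hsub'

lemma bmResp_spec (hs : TopOddValid s) {n : ℕ} {u : ℕ → Set X} (hg : bmGood n u)
    {V : Set X} (hV : V ∈ bmAllowed n u) :
    IsOpen (bmResp s n u V) ∧ (bmResp s n u V).Nonempty ∧ bmResp s n u V ⊆ V := by
  obtain ⟨hVo, hVne, hVsub, hVd⟩ := hV
  have hpp : TopPartialPlay
      (fun i : Fin (2*(n+1)+1) => if (i : ℕ) = 2*n+2 then V else u i.1) := by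
    refine ⟨fun i => ?_, fun i => ?_, fun i j hij => ?_⟩
    · show IsOpen (if (i : ℕ) = 2*n+2 then V else u i.1)
      split
      · exact hVo
      · next h => exact hg.1 i.1 (by have := i.isLt; omega)
    · show (if (i : ℕ) = 2*n+2 then V else u i.1).Nonempty
      split
      · exact hVne
      · next h => exact hg.2.1 i.1 (by have := i.isLt; omega)
    · show (if (j : ℕ) = 2*n+2 then V else u j.1) ⊆ (if (i : ℕ) = 2*n+2 then V else u i.1)
      have hij' : (i : ℕ) ≤ (j : ℕ) := Fin.le_def.1 hij
      by_cases hj : (j : ℕ) = 2*n+2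
      · rw [if_pos hj]
        by_cases hi : (i : ℕ) = 2*n+2
        · rw [if_pos hi]
        · rw [if_neg hi]
          exact hVsub.trans (chain_subset hg.2.2.1 (2*n+1) (by omega) i.1
            (by have := i.isLt; omega))
      · rw [if_neg hj]
        have hi : ¬ (i : ℕ) = 2*n+2 := by have := j.isLt; omega
        rw [if_neg hi]
        exact chain_subset hg.2.2.1 j.1 (by have := j.isLt; omega) i.1 hij'
  obtain ⟨ho, hne, hsub⟩ := hs (n+1) _ hpp
  refine ⟨ho, hne, hsub.trans ?_⟩
  have : ((Fin.last (2*(n+1))) : ℕ) = 2*n+2 := by rw [Fin.val_last]; omega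
  rw [if_pos this]

lemma bmResp0_spec (hs : TopOddValid s) {V : Set X} (hV : V ∈ bmAllowed0 X) :
    IsOpen (bmResp0 s V) ∧ (bmResp0 s V).Nonempty ∧ bmResp0 s V ⊆ V := by
  obtain ⟨hVo, hVne, hVd⟩ := hV
  have hpp : TopPartialPlay (fun _ : Fin (2*0+1) => V) :=
    ⟨fun _ => hVo, fun _ => hVne, fun _ _ _ => le_refl V⟩
  obtain ⟨ho, hne, hsub⟩ := hs 0 _ hpp
  exact ⟨ho, hne, hsub⟩

private lemma two_mul_pow_succ (n : ℕ) :
    2 * (2 : ℝ≥0∞)⁻¹ ^ (n+1) = (2 : ℝ≥0∞)⁻¹ ^ n := by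
  rw [pow_succ, mul_comm ((2 : ℝ≥0∞)⁻¹ ^ n), ← mul_assoc,
    ENNReal.mul_inv_cancel (by norm_num) (by norm_num), one_mul]

lemma exists_allowed {n : ℕ} {u : ℕ → Set X} {W : Set X}
    (hW : IsOpen W) (hOpen : IsOpen (u (2*n+1))) (hWne : (W ∩ u (2*n+1)).Nonempty) :
    ∃ V ∈ bmAllowed n u, V ⊆ W := by
  obtain ⟨x, hx⟩ := hWne
  obtain ⟨ε, hε, hball⟩ := EMetric.mem_nhds_iff.1 ((hW.inter hOpen).mem_nhds hx)
  set r := min ε ((2 : ℝ≥0∞)⁻¹ ^ (n+2)) with hr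
  have hrpos : 0 < r := lt_min hε (ENNReal.pow_pos (ENNReal.inv_pos.2 ENNReal.ofNat_ne_top) _)
  have hsub : EMetric.ball x r ⊆ W ∩ u (2*n+1) :=
    (EMetric.ball_subset_ball (min_le_left _ _)).trans hball
  refine ⟨EMetric.ball x r, ⟨EMetric.isOpen_ball, ⟨x, EMetric.mem_ball_self hrpos⟩,
    fun y hy => (hsub hy).2, ?_⟩, fun y hy => (hsub hy).1⟩
  calc EMetric.diam (EMetric.ball x r) ≤ 2 * r := EMetric.diam_ball
    _ ≤ 2 * (2 : ℝ≥0∞)⁻¹ ^ (n+2) := by gcongr; exact min_le_right _ _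
    _ = (2 : ℝ≥0∞)⁻¹ ^ (n+1) := two_mul_pow_succ (n+1)

lemma exists_allowed0 {W : Set X} (hW : IsOpen W) (hWne : W.Nonempty) :
    ∃ V ∈ bmAllowed0 X, V ⊆ W := by
  obtain ⟨x, hx⟩ := hWne
  obtain ⟨ε, hε, hball⟩ := EMetric.mem_nhds_iff.1 (hW.mem_nhds hx)
  set r := min ε ((2 : ℝ≥0∞)⁻¹) with hr
  have hrpos : 0 < r := lt_min hε (ENNReal.inv_pos.2 ENNReal.ofNat_ne_top)
  have hsub : EMetric.ball x r ⊆ W :=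
    (EMetric.ball_subset_ball (min_le_left _ _)).trans hball
  refine ⟨EMetric.ball x r, ⟨EMetric.isOpen_ball, ⟨x, EMetric.mem_ball_self hrpos⟩, ?_⟩, hsub⟩
  calc EMetric.diam (EMetric.ball x r) ≤ 2 * r := EMetric.diam_ball
    _ ≤ 2 * (2 : ℝ≥0∞)⁻¹ := by gcongr; exact min_le_right _ _
    _ = 1 := ENNReal.mul_inv_cancel (by norm_num) (by norm_num)

lemma bm_step_max (hs : TopOddValid s) {n : ℕ} {u : ℕ → Set X} (hu : u ∈ bmT s n)
    {W : Set X} (hW : IsOpen W) (hWne : (W ∩ u (2*n+1)).Nonempty) :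
    ∃ u', u' ∈ bmT s (n+1) ∧ (∀ i, i < 2*n+2 → u' i = u i) ∧
      (u' (2*(n+1)+1) ∩ W).Nonempty := by
  have hg := bmT_good s hs n u hu
  obtain ⟨V, hVall, hVW⟩ := exists_allowed hW (hg.1 (2*n+1) (by omega)) hWne
  obtain ⟨hro, hrne, hrsub⟩ := bmResp_spec s hs hg hVall
  obtain ⟨V', hV'C, hint⟩ := (bmChildren_spec s n u).2.2 V hVall hrne
  set u' : ℕ → Set X := fun i =>
    if i < 2*n+2 then u i else if i = 2*n+2 then V' else bmResp s n u V' with hu'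
  have hagree : ∀ i, i < 2*n+2 → u' i = u i := fun i hi => if_pos hi
  have h22 : u' (2*n+2) = V' := by rw [hu']; norm_num
  have h23 : u' (2*n+3) = bmResp s n u V' := by rw [hu']; norm_num
  have hmem : u' ∈ bmT s (n+1) := by
    refine ⟨bmT_congr s hagree hu, ?_, ?_⟩
    · rw [h22, bmChildren_congr s hagree]
      exact hV'C
    · rw [h23, ← bmResp_self s n u', h22, bmResp_congr s hagree]
  refine ⟨u', hmem, hagree, ?_⟩
  obtain ⟨z, hz1, hz2⟩ := hint
  have h21 : 2*(n+1)+1 = 2*n+3 := by omega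
  rw [h21, h23]
  exact ⟨z, hz2, hVW (hrsub hz1)⟩

lemma bm_base_max (hs : TopOddValid s) {W : Set X} (hW : IsOpen W) (hWne : W.Nonempty) :
    ∃ u, u ∈ bmT s 0 ∧ (u (2*0+1) ∩ W).Nonempty := by
  obtain ⟨V, hVall, hVW⟩ := exists_allowed0 hW hWne
  obtain ⟨hro, hrne, hrsub⟩ := bmResp0_spec s hs hVall
  obtain ⟨V', hV'C, hint⟩ := (bmChildren0_spec s).2.2 V hVall hrne
  set u : ℕ → Set X := fun i => if i = 0 then V' else bmResp0 s V' with hu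
  have h0 : u 0 = V' := by simp [hu]
  have h1 : u 1 = bmResp0 s V' := by simp [hu]
  have hmem : u ∈ bmT s 0 := by
    refine ⟨by rw [h0]; exact hV'C, ?_⟩
    rw [h1]
    unfold bmResp0
    refine congrArg _ (funext fun j => ?_)
    have : (j : ℕ) = 0 := by omega
    rw [this, h0]
  refine ⟨u, hmem, ?_⟩
  obtain ⟨z, hz1, hz2⟩ := hint
  rw [show 2*0+1 = 1 by omega, h1]
  exact ⟨z, hz2, hVW (hrsub hz1)⟩

private lemma bm_chain_agree {α : Type*} {u : ℕ → (ℕ → Set α)}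
    (h : ∀ n, ∀ i, i < 2*n+2 → u (n+1) i = u n i) :
    ∀ m n, m ≤ n → ∀ i, i < 2*m+2 → u n i = u m i := by
  intro m n hmn
  induction n with
  | zero => have : m = 0 := by omega
            subst this; intro i _; rfl
  | succ n ih =>
    rcases Nat.eq_or_lt_of_le hmn with rfl | hlt
    · intro i _; rfl
    · intro i hi
      have hmn' : m ≤ n := by omega
      rw [h n i (by omega), ih hmn' i hi]

private lemma bm_limit_agree {α : Type*} {u : ℕ → (ℕ → Set α)}
    (h : ∀ n, ∀ i, i < 2*n+2 → u (n+1) i = u n i) :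
    ∀ n i, i < 2*n+2 → u i i = u n i := by
  intro n i hi
  rcases Nat.le_total i n with hin | hni
  · exact (bm_chain_agree h i n hin i (by omega)).symm
  · exact bm_chain_agree h n i hni i hi

lemma bm_branch (hs : TopOddValid s)
    (hwin : ∀ U : ℕ → Set X, TopPlay U → TopOddFollows U s → (⋂ n, U n).Nonempty)
    {w : ℕ → Set X} (hw : ∀ n, w ∈ bmT s n) :
    ∃ x, ∀ n, x ∈ w n := by
  have hplay : TopPlay w := by
    refine ⟨fun m => (bmT_good s hs m w (hw m)).1 m (by omega),
      fun m => (bmT_good s hs m w (hw m)).2.1 m (by omega),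
      fun m => (bmT_good s hs (m+1) w (hw (m+1))).2.2.1 m (by omega)⟩
  have hfol : TopOddFollows w s := by
    intro k
    cases k with
    | zero => exact (hw 0).2
    | succ n =>
      have h := (hw (n+1)).2.2
      have h21 : 2*(n+1)+1 = 2*n+3 := by omega
      conv_lhs => rw [h21]
      exact h
  obtain ⟨x, hx⟩ := hwin w hplay hfol
  exact ⟨x, fun n => Set.mem_iInter.1 hx n⟩

/-- The open sets at level `n`. -/
def bmGn (n : ℕ) : Set X := ⋃ u ∈ bmT s n, u (2*n+1)

/-- The dense completely metrizable subspace. -/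
def bmG : Set X := ⋂ n, bmGn s n

lemma bmG_mem {x : X} (hx : x ∈ bmG s) (n : ℕ) : ∃ u ∈ bmT s n, x ∈ u (2*n+1) := by
  have := Set.mem_iInter.1 hx n
  simpa [bmGn] using this

lemma bmG_dense (hs : TopOddValid s)
    (hwin : ∀ U : ℕ → Set X, TopPlay U → TopOddFollows U s → (⋂ n, U n).Nonempty) :
    Dense (bmG s) := by
  rw [dense_iff_inter_open]
  intro W hW hWne
  obtain ⟨x₀, hx₀⟩ := hWne
  obtain ⟨ε, hε, hball⟩ := EMetric.mem_nhds_iff.1 (hW.mem_nhds hx₀)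
  set r := min (ε/2) 1 with hrdef
  have hrpos : 0 < r := lt_min (ENNReal.half_pos hε.ne') zero_lt_one
  have hrε : r < ε := by
    rcases eq_or_ne ε ⊤ with h | h
    · refine lt_of_le_of_lt (min_le_right _ _) ?_
      rw [h]; exact ENNReal.one_lt_top
    · exact lt_of_le_of_lt (min_le_left _ _) (ENNReal.half_lt_self hε.ne' h)
  set W' := EMetric.ball x₀ r with hW'def
  have hW'o : IsOpen W' := EMetric.isOpen_ball
  have hW'ne : W'.Nonempty := ⟨x₀, EMetric.mem_ball_self hrpos⟩
  -- recursively build a branch meeting W' at every level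
  have hQstep : ∀ n (v : {v : ℕ → Set X // v ∈ bmT s n ∧ (v (2*n+1) ∩ W').Nonempty}),
      ∃ w : {v : ℕ → Set X // v ∈ bmT s (n+1) ∧ (v (2*(n+1)+1) ∩ W').Nonempty},
        ∀ i, i < 2*n+2 → w.1 i = v.1 i := by
    intro n v
    obtain ⟨v', h1, h2, h3⟩ := bm_step_max s hs v.2.1 hW'o
      (by rw [Set.inter_comm]; exact v.2.2)
    exact ⟨⟨v', h1, by rw [Set.inter_comm] at h3; rw [Set.inter_comm]; exact h3⟩, h2⟩
  choose F hF using hQstep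
  obtain ⟨u0, hu0T, hu0ne⟩ := bm_base_max s hs hW'o hW'ne
  set seq : ∀ n, {v : ℕ → Set X // v ∈ bmT s n ∧ (v (2*n+1) ∩ W').Nonempty} :=
    fun n => Nat.rec ⟨u0, hu0T, hu0ne⟩ F n with hseqdef
  have hagree : ∀ n, ∀ i, i < 2*n+2 → (seq (n+1)).1 i = (seq n).1 i :=
    fun n => hF n (seq n)
  set w : ℕ → Set X := fun i => (seq i).1 i with hwdef
  have hwa : ∀ n i, i < 2*n+2 → w i = (seq n).1 i :=
    bm_limit_agree (u := fun n => (seq n).1) hagree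
  have hwT : ∀ n, w ∈ bmT s n := fun n => bmT_congr s (hwa n) (seq n).2.1
  obtain ⟨x, hx⟩ := bm_branch s hs hwin hwT
  have hxG : x ∈ bmG s := by
    refine Set.mem_iInter.2 fun n => ?_
    refine Set.mem_biUnion (hwT n) (hx (2*n+1))
  refine ⟨x, ?_, hxG⟩
  -- x is within r + small of x₀, hence in the ε-ball around x₀, hence in W
  apply hball
  show x ∈ Metric.eball x₀ ε
  rw [EMetric.mem_ball]
  have hbound : ∀ n : ℕ, edist x x₀ < (2 : ℝ≥0∞)⁻¹ ^ n + r := by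
    intro n
    obtain ⟨y, hy1, hy2⟩ := (seq n).2.2
    rw [← hwa n (2*n+1) (by omega)] at hy1
    have hg := bmT_good s hs n w (hwT n)
    have hxy : edist x y ≤ (2 : ℝ≥0∞)⁻¹ ^ n := by
      have hsub : w (2*n+1) ⊆ w (2*n) := hg.2.2.1 (2*n) (by omega)
      exact le_trans (EMetric.edist_le_diam_of_mem (hsub (hx (2*n+1))) (hsub hy1))
        (hg.2.2.2 n (by omega))
    calc edist x x₀ ≤ edist x y + edist y x₀ := edist_triangle _ _ _
      _ < (2 : ℝ≥0∞)⁻¹ ^ n + r := by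
          have hfin : edist x y ≠ ⊤ :=
            (lt_of_le_of_lt hxy (lt_of_le_of_lt
              (pow_le_one' (ENNReal.inv_le_one.2 one_le_two) n) ENNReal.one_lt_top)).ne
          exact ENNReal.add_lt_add_of_le_of_lt hfin hxy (EMetric.mem_ball.1 hy2)
  rcases eq_or_ne ε ⊤ with hT | hT
  · rw [hT]
    exact lt_of_lt_of_le (hbound 0) le_top
  · obtain ⟨n, hn⟩ := ENNReal.exists_inv_two_pow_lt (ENNReal.half_pos hε.ne').ne'
    have hhalf : (ε/2) ≠ ⊤ := (ENNReal.div_lt_top hT (by norm_num)).ne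
    calc edist x x₀ < (2 : ℝ≥0∞)⁻¹ ^ n + r := hbound n
      _ ≤ (2 : ℝ≥0∞)⁻¹ ^ n + ε/2 := add_le_add_right (min_le_left _ _) _
      _ < ε/2 + ε/2 := ENNReal.add_lt_add_right hhalf hn
      _ = ε := ENNReal.add_halves ε

/-- The node of the tree at level `n` containing a point of `bmG`. -/
noncomputable def bmNode (x : X) (n : ℕ) : ℕ → Set X :=
  Classical.epsilon (fun u => u ∈ bmT s n ∧ x ∈ u (2*n+1))

lemma bmNode_spec {x : X} (hx : x ∈ bmG s) (n : ℕ) :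
    bmNode s x n ∈ bmT s n ∧ x ∈ bmNode s x n (2*n+1) := by
  obtain ⟨u, hu, hxu⟩ := bmG_mem s hx n
  exact Classical.epsilon_spec (⟨u, hu, hxu⟩ : ∃ u, u ∈ bmT s n ∧ x ∈ u (2*n+1))

/-- Agreement of the level-`n` nodes of two points of `bmG`. -/
def bmAgree (n : ℕ) (x y : X) : Prop :=
  ∀ i, i < 2*n+2 → bmNode s x n i = bmNode s y n i

lemma bmAgree_refl (n : ℕ) (x : X) : bmAgree s n x x := fun _ _ => rfl

lemma bmAgree_symm {n : ℕ} {x y : X} (h : bmAgree s n x y) : bmAgree s n y x :=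
  fun i hi => (h i hi).symm

lemma bmAgree_trans {n : ℕ} {x y z : X} (h : bmAgree s n x y) (h' : bmAgree s n y z) :
    bmAgree s n x z := fun i hi => (h i hi).trans (h' i hi)

lemma bmAgree_of_mem (hs : TopOddValid s) {n : ℕ} {x y : X} (hx : x ∈ bmG s) (hy : y ∈ bmG s)
    (h : y ∈ bmNode s x n (2*n+1)) : bmAgree s n x y := by
  rcases bmT_dichotomy s hs n _ (bmNode_spec s hx n).1 _ (bmNode_spec s hy n).1 with he | hd
  · exact he
  · exact absurd (Set.disjoint_left.1 hd h (bmNode_spec s hy n).2) (fun h => h)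

lemma bmAgree_mem {n : ℕ} {x y : X} (hy : y ∈ bmG s) (h : bmAgree s n x y) :
    y ∈ bmNode s x n (2*n+1) := by
  rw [h (2*n+1) (by omega)]
  exact (bmNode_spec s hy n).2

/-- coherence of nodes of the same point across levels -/
lemma bmNode_coh (hs : TopOddValid s) {x : X} (hx : x ∈ bmG s) {m n : ℕ} (hmn : m ≤ n) :
    ∀ i, i < 2*m+2 → bmNode s x n i = bmNode s x m i := by
  have hTn := (bmNode_spec s hx n).1
  have hTm := (bmNode_spec s hx m).1
  have hxm : x ∈ bmNode s x n (2*m+1) := by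
    have hg := bmT_good s hs n _ hTn
    exact chain_subset hg.2.2.1 (2*n+1) (by omega) (2*m+1) (by omega)
      (bmNode_spec s hx n).2
  rcases bmT_dichotomy s hs m _ (bmT_anti_le s hmn hTn) _ hTm with he | hd
  · exact he
  · exact absurd (Set.disjoint_left.1 hd hxm (bmNode_spec s hx m).2) (fun h => h)

lemma bmAgree_mono (hs : TopOddValid s) {m n : ℕ} (hmn : m ≤ n) {x y : X}
    (hx : x ∈ bmG s) (hy : y ∈ bmG s) (h : bmAgree s n x y) : bmAgree s m x y := by
  intro i hi
  rw [← bmNode_coh s hs hx hmn i hi, ← bmNode_coh s hs hy hmn i hi]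
  exact h i (by omega)

/-- If the nodes at level n disagree at two points of the intersection they are... -/
lemma bmNode_eq_of_branch (hs : TopOddValid s) {x : X} (hx : x ∈ bmG s) {n : ℕ}
    {w : ℕ → Set X} (hw : w ∈ bmT s n) (hxw : x ∈ w (2*n+1)) :
    ∀ i, i < 2*n+2 → bmNode s x n i = w i := by
  rcases bmT_dichotomy s hs n _ (bmNode_spec s hx n).1 _ hw with he | hd
  · exact he
  · exact absurd (Set.disjoint_left.1 hd (bmNode_spec s hx n).2 hxw) (fun h => h)

open Classical in
/-- The penalty at level `n`. -/
noncomputable def bmPen (n : ℕ) (x y : X) : ℝ :=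
  if bmAgree s n x y then 0 else (2 : ℝ)⁻¹ ^ n

lemma bmPen_of_agree {n : ℕ} {x y : X} (h : bmAgree s n x y) : bmPen s n x y = 0 := by
  unfold bmPen; rw [if_pos h]

lemma bmPen_of_not_agree {n : ℕ} {x y : X} (h : ¬ bmAgree s n x y) :
    bmPen s n x y = (2 : ℝ)⁻¹ ^ n := by
  unfold bmPen; rw [if_neg h]

lemma bmPen_nonneg (n : ℕ) (x y : X) : 0 ≤ bmPen s n x y := by
  unfold bmPen; split
  · rfl
  · positivity

lemma bmPen_le (n : ℕ) (x y : X) : bmPen s n x y ≤ (2 : ℝ)⁻¹ ^ n := by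
  unfold bmPen; split
  · positivity
  · rfl

lemma bmPen_summable (x y : X) : Summable (fun n => bmPen s n x y) :=
  Summable.of_nonneg_of_le (fun n => bmPen_nonneg s n x y) (fun n => bmPen_le s n x y)
    (summable_geometric_of_lt_one (by norm_num) (by norm_num))

/-- The refined distance on `X` adapted to `bmG`. -/
noncomputable def bmD (x y : X) : ℝ := dist x y + ∑' n, bmPen s n x y

lemma bmD_self (x : X) : bmD s x x = 0 := by
  unfold bmD
  have : ∀ n, bmPen s n x x = 0 := fun n => bmPen_of_agree s (bmAgree_refl s n x)
  simp [this]

lemma bmD_comm (x y : X) : bmD s x y = bmD s y x := by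
  unfold bmD
  rw [dist_comm]
  congr 1
  refine tsum_congr fun n => ?_
  unfold bmPen
  by_cases h : bmAgree s n x y
  · rw [if_pos h, if_pos (bmAgree_symm s h)]
  · rw [if_neg h, if_neg (fun h' => h (bmAgree_symm s h'))]

lemma dist_le_bmD (x y : X) : dist x y ≤ bmD s x y :=
  le_add_of_nonneg_right (tsum_nonneg (fun n => bmPen_nonneg s n x y))

lemma bmD_nonneg (x y : X) : 0 ≤ bmD s x y := dist_nonneg.trans (dist_le_bmD s x y)

lemma bmD_eq_zero {x y : X} (h : bmD s x y = 0) : x = y :=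
  dist_le_zero.1 (h ▸ dist_le_bmD s x y)

lemma bmD_triangle (x y z : X) : bmD s x z ≤ bmD s x y + bmD s y z := by
  have htri : ∀ n, bmPen s n x z ≤ bmPen s n x y + bmPen s n y z := by
    intro n
    by_cases hxz : bmAgree s n x z
    · rw [bmPen_of_agree s hxz]
      exact add_nonneg (bmPen_nonneg s n x y) (bmPen_nonneg s n y z)
    · rw [bmPen_of_not_agree s hxz]
      by_cases hxy : bmAgree s n x y
      · have hyz : ¬ bmAgree s n y z := fun h => hxz (bmAgree_trans s hxy h)
        rw [bmPen_of_not_agree s hyz]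
        have := bmPen_nonneg s n x y
        linarith
      · rw [bmPen_of_not_agree s hxy]
        have := bmPen_nonneg s n y z
        linarith
  calc bmD s x z = dist x z + ∑' n, bmPen s n x z := rfl
    _ ≤ (dist x y + dist y z) + (∑' n, (bmPen s n x y + bmPen s n y z)) :=
        add_le_add (dist_triangle x y z) (Summable.tsum_le_tsum htri (bmPen_summable s x z)
          ((bmPen_summable s x y).add (bmPen_summable s y z)))
    _ = bmD s x y + bmD s y z := by
        rw [Summable.tsum_add (bmPen_summable s x y) (bmPen_summable s y z)]
        unfold bmD
        ring

lemma bmD_lower {n : ℕ} {x y : X} (h : ¬ bmAgree s n x y) : (2 : ℝ)⁻¹ ^ n ≤ bmD s x y :=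
  calc (2 : ℝ)⁻¹ ^ n = bmPen s n x y := (bmPen_of_not_agree s h).symm
    _ ≤ ∑' m, bmPen s m x y :=
        Summable.le_tsum (bmPen_summable s x y) n (fun m _ => bmPen_nonneg s m x y)
    _ ≤ bmD s x y := le_add_of_nonneg_left dist_nonneg

lemma bmD_le_of_agree (hs : TopOddValid s) {n : ℕ} {x y : X} (hx : x ∈ bmG s) (hy : y ∈ bmG s)
    (h : bmAgree s n x y) : bmD s x y ≤ dist x y + (2 : ℝ)⁻¹ ^ n := by
  unfold bmD
  have hb : ∀ m, bmPen s m x y ≤ (if m ≤ n then 0 else (2 : ℝ)⁻¹ ^ m) := by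
    intro m
    by_cases hm : m ≤ n
    · rw [if_pos hm, bmPen_of_agree s (bmAgree_mono s hs hm hx hy h)]
    · rw [if_neg hm]
      exact bmPen_le s m x y
  have hsg : Summable (fun m => if m ≤ n then (0:ℝ) else (2 : ℝ)⁻¹ ^ m) := by
    refine Summable.of_nonneg_of_le (fun m => ?_) (fun m => ?_)
      (summable_geometric_of_lt_one (by norm_num) (by norm_num : (2:ℝ)⁻¹ < 1))
    · split
      · rfl
      · positivity
    · split
      · positivity
      · exact le_rfl
  refine add_le_add_right (le_trans (Summable.tsum_le_tsum hb (bmPen_summable s x y) hsg) ?_) _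
  have hkey := Summable.sum_add_tsum_nat_add (f := fun m => if m ≤ n then (0:ℝ) else (2 : ℝ)⁻¹ ^ m)
    (n+1) hsg
  have h1 : ∑ i ∈ Finset.range (n+1), (if i ≤ n then (0:ℝ) else (2 : ℝ)⁻¹ ^ i) = 0 :=
    Finset.sum_eq_zero (fun i hi => if_pos (by have := Finset.mem_range.1 hi; omega))
  have h2 : (fun i : ℕ => if i + (n+1) ≤ n then (0:ℝ) else (2 : ℝ)⁻¹ ^ (i + (n+1)))
      = fun i : ℕ => (2 : ℝ)⁻¹ ^ (n+1) * (2 : ℝ)⁻¹ ^ i := by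
    funext i
    rw [if_neg (by omega), pow_add, mul_comm]
  rw [← hkey, h1, zero_add, h2, tsum_mul_left,
    tsum_geometric_of_lt_one (by norm_num) (by norm_num : (2:ℝ)⁻¹ < 1)]
  have : (1 - (2:ℝ)⁻¹)⁻¹ = 2 := by norm_num
  rw [this, pow_succ]
  exact le_of_eq (by ring)

lemma bm_dist_le {x y : X} {n : ℕ} (h : edist x y ≤ (2 : ℝ≥0∞)⁻¹ ^ n) :
    dist x y ≤ (2 : ℝ)⁻¹ ^ n := by
  rw [dist_edist]
  calc (edist x y).toReal ≤ ((2 : ℝ≥0∞)⁻¹ ^ n).toReal :=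
      ENNReal.toReal_mono (ENNReal.pow_ne_top (by simp)) h
    _ = (2 : ℝ)⁻¹ ^ n := by
      simp [ENNReal.toReal_pow, ENNReal.toReal_inv]

lemma bm_cell_dist (hs : TopOddValid s) {n : ℕ} {w : ℕ → Set X} (hw : w ∈ bmT s n) {x y : X}
    (hxw : x ∈ w (2*n+1)) (hyw : y ∈ w (2*n+1)) : dist x y ≤ (2 : ℝ)⁻¹ ^ n := by
  have hg := bmT_good s hs n w hw
  have hsub : w (2*n+1) ⊆ w (2*n) := hg.2.2.1 (2*n) (by omega)
  exact bm_dist_le (le_trans (EMetric.edist_le_diam_of_mem (hsub hxw) (hsub hyw))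
    (hg.2.2.2 n le_rfl))

lemma bm_ball_agree (hs : TopOddValid s) {x : X} (hx : x ∈ bmG s) (n : ℕ) :
    ∃ δ > 0, ∀ y ∈ bmG s, dist x y < δ → bmAgree s n x y := by
  have ho : IsOpen (bmNode s x n (2*n+1)) :=
    (bmT_good s hs n _ (bmNode_spec s hx n).1).1 (2*n+1) (by omega)
  obtain ⟨δ, hδ, hball⟩ := Metric.isOpen_iff.1 ho x (bmNode_spec s hx n).2
  exact ⟨δ, hδ, fun y hy hdist => bmAgree_of_mem s hs hx hy
    (hball (by rw [Metric.mem_ball, dist_comm]; exact hdist))⟩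

private lemma bm_complete_aux {α : Type*} [m : MetricSpace α]
    (h : ∀ f : ℕ → α, (∀ ε > 0, ∃ N, ∀ k ≥ N, ∀ l ≥ N, dist (f k) (f l) < ε) →
      ∃ a, ∀ ε > 0, ∃ N, ∀ k ≥ N, dist (f k) a < ε) : CompleteSpace α := by
  refine Metric.complete_of_cauchySeq_tendsto fun f hf => ?_
  obtain ⟨a, ha⟩ := h f (Metric.cauchySeq_iff.1 hf)
  exact ⟨a, Metric.tendsto_atTop.2 ha⟩

theorem bm_key (h : TopOddWins X) :
    ∃ G : Set X, Dense G ∧ IsCompletelyMetrizable ↥G := by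
  obtain ⟨s, hs, hwin⟩ := h
  -- the topology characterization of the new distance
  have hH : ∀ U : Set ↥(bmG s), IsOpen U ↔
      ∀ x ∈ U, ∃ ε > 0, ∀ y : ↥(bmG s), bmD s x.1 y.1 < ε → y ∈ U := by
    intro U
    constructor
    · intro hU x hxU
      obtain ⟨V, hVo, hVU⟩ := (Topology.IsInducing.subtypeVal.isOpen_iff).1 hU
      have hxV : (x : X) ∈ V := by
        rw [← hVU] at hxU
        exact hxU
      obtain ⟨ε, hε, hball⟩ := Metric.isOpen_iff.1 hVo x.1 hxV
      refine ⟨ε, hε, fun y hy => ?_⟩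
      rw [← hVU]
      refine hball ?_
      rw [Metric.mem_ball, dist_comm]
      exact lt_of_le_of_lt (dist_le_bmD s x.1 y.1) hy
    · intro hU
      have key : ∀ x : ↥(bmG s), x ∈ U →
          ∃ δ > 0, ∀ y : ↥(bmG s), dist x.1 y.1 < δ → y ∈ U := by
        intro x hxU
        obtain ⟨ε, hε, hband⟩ := hU x hxU
        obtain ⟨n, hn⟩ := exists_pow_lt_of_lt_one (half_pos hε)
          (by norm_num : (2:ℝ)⁻¹ < 1)
        obtain ⟨δ₁, hδ₁, hagr⟩ := bm_ball_agree s hs x.2 n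
        refine ⟨min δ₁ (ε/2), lt_min hδ₁ (half_pos hε), fun y hdist => ?_⟩
        refine hband y ?_
        have hA : bmAgree s n x.1 y.1 :=
          hagr y.1 y.2 (lt_of_lt_of_le hdist (min_le_left _ _))
        have hd2 : dist x.1 y.1 < ε/2 := lt_of_lt_of_le hdist (min_le_right _ _)
        calc bmD s x.1 y.1 ≤ dist x.1 y.1 + (2:ℝ)⁻¹ ^ n :=
              bmD_le_of_agree s hs x.2 y.2 hA
          _ < ε/2 + ε/2 := by linarith
          _ = ε := by ring
      choose δ hδpos hδ using key
      rw [Topology.IsInducing.subtypeVal.isOpen_iff]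
      refine ⟨⋃ (x : ↥(bmG s)) (hx : x ∈ U), Metric.ball x.1 (δ x hx),
        isOpen_iUnion fun x => isOpen_iUnion fun hx => Metric.isOpen_ball, ?_⟩
      ext y
      simp only [Set.mem_preimage, Set.mem_iUnion, Metric.mem_ball]
      constructor
      · rintro ⟨x, hx, hd⟩
        exact hδ x hx y (by rw [dist_comm]; exact hd)
      · intro hyU
        refine ⟨y, hyU, ?_⟩
        rw [dist_self]
        exact hδpos y hyU
  -- the metric space structure
  set m : MetricSpace ↥(bmG s) := MetricSpace.ofDistTopology
    (fun x y => bmD s x.1 y.1)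
    (fun x => bmD_self s x.1)
    (fun x y => bmD_comm s x.1 y.1)
    (fun x y z => bmD_triangle s x.1 y.1 z.1)
    hH
    (fun x y hxy => Subtype.ext (bmD_eq_zero s hxy)) with hm
  refine ⟨bmG s, bmG_dense s hs hwin, m, rfl, ?_⟩
  refine bm_complete_aux (m := m) ?_
  intro f hf
  have hfc : ∀ ε > 0, ∃ N, ∀ k ≥ N, ∀ l ≥ N, bmD s (f k).1 (f l).1 < ε := hf
  have hstab : ∀ n : ℕ, ∃ N, ∀ k ≥ N, ∀ l ≥ N, bmAgree s n (f k).1 (f l).1 := by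
    intro n
    obtain ⟨N, hN⟩ := hfc ((2:ℝ)⁻¹ ^ n) (by positivity)
    refine ⟨N, fun k hk l hl => ?_⟩
    by_contra hno
    exact absurd (hN k hk l hl) (not_lt.2 (bmD_lower s hno))
  choose N hN using hstab
  set K : ℕ → ℕ := fun n => (Finset.range (n+1)).sup N with hK
  have hKmono : ∀ a b, a ≤ b → K a ≤ K b :=
    fun a b hab => Finset.sup_mono (Finset.range_subset_range.2 (by omega))
  have hKN : ∀ n, N n ≤ K n := fun n => Finset.le_sup (Finset.self_mem_range_succ n)
  have hstab' : ∀ n, ∀ k ≥ K n, ∀ l ≥ K n, bmAgree s n (f k).1 (f l).1 :=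
    fun n k hk l hl => hN n k (le_trans (hKN n) hk) l (le_trans (hKN n) hl)
  set nod : ℕ → (ℕ → Set X) := fun n => bmNode s (f (K n)).1 n with hnod
  have hchain : ∀ n, ∀ i, i < 2*n+2 → nod (n+1) i = nod n i := by
    intro n i hi
    have h1 : bmNode s (f (K (n+1))).1 (n+1) i = bmNode s (f (K (n+1))).1 n i :=
      bmNode_coh s hs (f (K (n+1))).2 (Nat.le_succ n) i hi
    have h2 : bmAgree s n (f (K (n+1))).1 (f (K n)).1 :=
      hstab' n _ (hKmono n (n+1) (Nat.le_succ n)) _ le_rfl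
    show bmNode s (f (K (n+1))).1 (n+1) i = bmNode s (f (K n)).1 n i
    rw [h1]
    exact h2 i hi
  set w : ℕ → Set X := fun i => nod i i with hw
  have hwa : ∀ n i, i < 2*n+2 → w i = nod n i := bm_limit_agree hchain
  have hwT : ∀ n, w ∈ bmT s n :=
    fun n => bmT_congr s (hwa n) (bmNode_spec s (f (K n)).2 n).1
  obtain ⟨y₀, hy₀⟩ := bm_branch s hs hwin hwT
  have hy₀G : y₀ ∈ bmG s :=
    Set.mem_iInter.2 fun n => Set.mem_biUnion (hwT n) (hy₀ (2*n+1))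
  refine ⟨⟨y₀, hy₀G⟩, ?_⟩
  intro ε hε
  obtain ⟨n, hn⟩ := exists_pow_lt_of_lt_one (by positivity : (0:ℝ) < ε/3)
    (by norm_num : (2:ℝ)⁻¹ < 1)
  refine ⟨K n, fun k hk => ?_⟩
  have hagfk : ∀ i, i < 2*n+2 → bmNode s (f k).1 n i = w i := by
    intro i hi
    rw [hwa n i hi]
    exact hstab' n k hk (K n) le_rfl i hi
  have hyw : ∀ i, i < 2*n+2 → bmNode s y₀ n i = w i :=
    bmNode_eq_of_branch s hs hy₀G (hwT n) (hy₀ (2*n+1))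
  have hagky : bmAgree s n (f k).1 y₀ := fun i hi => (hagfk i hi).trans (hyw i hi).symm
  have hfkw : (f k).1 ∈ w (2*n+1) := by
    rw [← hagfk (2*n+1) (by omega)]
    exact (bmNode_spec s (f k).2 n).2
  have hdistb : dist (f k).1 y₀ ≤ (2:ℝ)⁻¹ ^ n :=
    bm_cell_dist s hs (hwT n) hfkw (hy₀ (2*n+1))
  show bmD s (f k).1 y₀ < ε
  calc bmD s (f k).1 y₀ ≤ dist (f k).1 y₀ + (2:ℝ)⁻¹ ^ n :=
      bmD_le_of_agree s hs (f k).2 hy₀G hagky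
    _ ≤ (2:ℝ)⁻¹ ^ n + (2:ℝ)⁻¹ ^ n := by linarith
    _ < ε := by linarith
end BMproof


/-- If `X` is a metrizable space and Odd has a winning strategy
in the classical Banach–Mazur game `BM(X)`, then `X` contains a dense completely
metrizable subspace. -/
theorem dense_completely_metrizable_of_odd_wins {X : Type*}
    [TopologicalSpace X] [TopologicalSpace.MetrizableSpace X]
    (h : TopOddWins X) :
    ∃ G : Set X, Dense G ∧ IsCompletelyMetrizable ↥G := by
  letI : MetricSpace X := TopologicalSpace.metrizableSpaceMetric X
  exact bm_key h
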